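/- Let q = √5 − 2 (the diamond probability corresponding to the critical percolation parameter p_c = (√5−1)/2 of the diamond hierarchical lattice). Then for all n ≥ 0, ∫ z dμ_n(z) ≥ ((14 − 4√5)/3)^n. Consequently, the annealed resistance exponent satisfies α = lim_{n→∞} (1/n)·log(∫ z dμ_n(z)) ≥ log((14 − 4√5)/3) > 0. -/

import Mathlib

open MeasureTheory ProbabilityTheory Filter

noncomputable def Sfun : ℝ × ℝ → ℝ := fun p => p.1 + p.2

noncomputable def Dfun : ℝ × ℝ × ℝ × ℝ → ℝ := fun p =>
  ((p.1 + p.2.1) * (p.2.2.1 + p.2.2.2)) / (p.1 + p.2.1 + p.2.2.1 + p.2.2.2)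

/-- One-step resistance recursion map on Borel measures on ℝ. -/
noncomputable def Tq (q : ℝ) (μ : Measure ℝ) : Measure ℝ :=
  ENNReal.ofReal (1 - q) • Measure.map Sfun (μ.prod μ) +
    ENNReal.ofReal q • Measure.map Dfun (μ.prod (μ.prod (μ.prod μ)))

/-- μₙ = T_qⁿ δ₁ : law of the two-terminal resistance after n replacement steps. -/
noncomputable def mu (q : ℝ) (n : ℕ) : Measure ℝ := (Tq q)^[n] (Measure.dirac 1)

open Set

noncomputable def Par : ℝ × ℝ → ℝ := fun r => r.1 * r.2 / (r.1 + r.2)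

lemma meas_S : Measurable Sfun := measurable_fst.add measurable_snd

lemma meas_D : Measurable Dfun := by
  unfold Dfun
  fun_prop

lemma meas_Par : Measurable Par := by
  unfold Par
  fun_prop

/-- the pair measure κ of a measure -/
noncomputable def kap (μ : Measure ℝ) : Measure ℝ := Measure.map Sfun (μ.prod μ)

lemma Dfun_comp_assoc : Dfun ∘ (MeasurableEquiv.prodAssoc (α := ℝ) (β := ℝ) (γ := ℝ × ℝ))
    = Par ∘ (Prod.map Sfun Sfun) := by
  funext p
  obtain ⟨⟨x1, x2⟩, x3, x4⟩ := p
  simp only [Function.comp_apply, MeasurableEquiv.prodAssoc, MeasurableEquiv.coe_mk,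
    Equiv.prodAssoc_apply, Dfun, Par, Sfun, Prod.map]
  ring

lemma map_D_eq (μ : Measure ℝ) [SFinite μ] :
    Measure.map Dfun (μ.prod (μ.prod (μ.prod μ))) = Measure.map Par ((kap μ).prod (kap μ)) := by
  have h1 : μ.prod (μ.prod (μ.prod μ)) =
      Measure.map (MeasurableEquiv.prodAssoc (α := ℝ) (β := ℝ) (γ := ℝ × ℝ))
        ((μ.prod μ).prod (μ.prod μ)) := (Measure.prodAssoc_prod).symm
  rw [h1, Measure.map_map meas_D (MeasurableEquiv.measurable _)]
  rw [Dfun_comp_assoc, ← Measure.map_map meas_Par (meas_S.prodMap meas_S), kap,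
    Measure.map_prod_map _ _ meas_S meas_S]

lemma Tq_eq (q : ℝ) (μ : Measure ℝ) [SFinite μ] :
    Tq q μ = ENNReal.ofReal (1 - q) • kap μ +
      ENNReal.ofReal q • Measure.map Par ((kap μ).prod (kap μ)) := by
  rw [Tq, map_D_eq]; rfl

instance kap_prob (μ : Measure ℝ) [IsProbabilityMeasure μ] : IsProbabilityMeasure (kap μ) :=
  Measure.isProbabilityMeasure_map meas_S.aemeasurable

lemma Tq_prob (q : ℝ) (hq0 : 0 ≤ q) (hq1 : q ≤ 1) (μ : Measure ℝ) [IsProbabilityMeasure μ] :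
    IsProbabilityMeasure (Tq q μ) := by
  constructor
  rw [Tq_eq]
  have h1 : IsProbabilityMeasure (Measure.map Par ((kap μ).prod (kap μ))) :=
    Measure.isProbabilityMeasure_map meas_Par.aemeasurable
  simp only [Measure.add_apply, Measure.smul_apply, smul_eq_mul, measure_univ, mul_one]
  rw [← ENNReal.ofReal_add (by linarith) hq0]
  norm_num

/-- good measure: probability measure a.e. supported in [lo,hi] -/
def Good (lo hi : ℝ) (μ : Measure ℝ) : Prop :=
  IsProbabilityMeasure μ ∧ (∀ᵐ x ∂μ, x ∈ Icc lo hi)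

lemma integrable_of_ae_bdd {α : Type*} [MeasurableSpace α] {ρ : Measure α} [IsFiniteMeasure ρ]
    {f : α → ℝ} (hf : AEStronglyMeasurable f ρ) {C : ℝ} (h : ∀ᵐ a ∂ρ, |f a| ≤ C) :
    Integrable f ρ :=
  Integrable.mono' (integrable_const C) hf (by simpa [Real.norm_eq_abs] using h)

lemma ae_prod_box {μ ν : Measure ℝ} [SFinite μ] [SFinite ν]
    [IsProbabilityMeasure μ] [IsProbabilityMeasure ν]
    {s t : Set ℝ} (hμ : ∀ᵐ x ∂μ, x ∈ s) (hν : ∀ᵐ y ∂ν, y ∈ t) :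
    ∀ᵐ p ∂(μ.prod ν), p.1 ∈ s ∧ p.2 ∈ t := by
  have h1 : ∀ᵐ p ∂(μ.prod ν), p.1 ∈ s := by
    have hm : Measure.map Prod.fst (μ.prod ν) = μ := by
      rw [← Measure.fst]; exact Measure.fst_prod
    refine ae_of_ae_map measurable_fst.aemeasurable ?_
    rwa [hm]
  have h2 : ∀ᵐ p ∂(μ.prod ν), p.2 ∈ t := by
    have hm : Measure.map Prod.snd (μ.prod ν) = ν := by
      rw [← Measure.snd]; exact Measure.snd_prod
    refine ae_of_ae_map measurable_snd.aemeasurable ?_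
    rwa [hm]
  exact h1.and h2

lemma kap_good {μ : Measure ℝ} {lo hi : ℝ} (h : Good lo hi μ) (h0 : 0 ≤ lo) :
    Good (2 * lo) (2 * hi) (kap μ) := by
  haveI := h.1
  refine ⟨kap_prob μ, ?_⟩
  rw [kap]
  refine (ae_map_iff meas_S.aemeasurable measurableSet_Icc).2 ?_
  filter_upwards [ae_prod_box h.2 h.2] with p hp
  obtain ⟨⟨h1, h2⟩, h3, h4⟩ := hp
  constructor <;> [skip; skip] <;> simp only [Sfun] <;> nlinarith

lemma integral_cauchy_schwarz {α : Type*} [MeasurableSpace α] {ρ : Measure α}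
    {f g : α → ℝ}
    (hf2 : Integrable (fun a => f a ^ 2) ρ) (hg2 : Integrable (fun a => g a ^ 2) ρ)
    (hfg : Integrable (fun a => f a * g a) ρ) :
    (∫ a, f a * g a ∂ρ) ^ 2 ≤ (∫ a, f a ^ 2 ∂ρ) * (∫ a, g a ^ 2 ∂ρ) := by
  have key : ∀ t : ℝ,
      0 ≤ (∫ a, f a ^ 2 ∂ρ) * (t * t) + (2 * ∫ a, f a * g a ∂ρ) * t + ∫ a, g a ^ 2 ∂ρ := by
    intro t
    have i1 : Integrable (fun a => t ^ 2 * f a ^ 2) ρ := hf2.const_mul _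
    have i2 : Integrable (fun a => 2 * t * (f a * g a)) ρ := hfg.const_mul _
    have i12 : Integrable (fun a => t ^ 2 * f a ^ 2 + 2 * t * (f a * g a)) ρ := i1.add i2
    have h2 : 0 ≤ ∫ a, (t ^ 2 * f a ^ 2 + 2 * t * (f a * g a)) + g a ^ 2 ∂ρ :=
      integral_nonneg fun a => by
        simp only [Pi.zero_apply]
        nlinarith [sq_nonneg (t * f a + g a)]
    rw [integral_add i12 hg2, integral_add i1 i2, integral_const_mul,
      integral_const_mul] at h2
    nlinarith [h2]
  have hd := discrim_le_zero key
  rw [discrim] at hd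
  nlinarith [hd]

noncomputable def m1 (μ : Measure ℝ) : ℝ := ∫ z, z ∂μ
noncomputable def m2 (μ : Measure ℝ) : ℝ := ∫ z, z ^ 2 ∂μ

lemma abs_le_of_mem_Icc {x lo hi : ℝ} (h : x ∈ Icc lo hi) : |x| ≤ max |lo| |hi| :=
  abs_le_max_abs_abs h.1 h.2

lemma good_int {μ : Measure ℝ} {lo hi : ℝ} (h : Good lo hi μ) {f : ℝ → ℝ}
    (hfm : AEStronglyMeasurable f μ) {C : ℝ} (hC : ∀ x ∈ Icc lo hi, |f x| ≤ C) :
    Integrable f μ := by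
  haveI := h.1
  exact integrable_of_ae_bdd hfm (by filter_upwards [h.2] with x hx using hC x hx)

lemma good_int_id {μ : Measure ℝ} {lo hi : ℝ} (h : Good lo hi μ) :
    Integrable (fun z : ℝ => z) μ :=
  good_int h aestronglyMeasurable_id (fun x hx => abs_le_of_mem_Icc hx)

lemma good_int_sq {μ : Measure ℝ} {lo hi : ℝ} (h : Good lo hi μ) :
    Integrable (fun z : ℝ => z ^ 2) μ :=
  good_int h (measurable_id.pow_const 2).aestronglyMeasurable
    (C := (max |lo| |hi|) ^ 2) (fun x hx => by
      rw [abs_pow]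
      exact pow_le_pow_left₀ (abs_nonneg _) (abs_le_of_mem_Icc hx) 2)

lemma good_m1_mem {μ : Measure ℝ} {lo hi : ℝ} (h : Good lo hi μ) : m1 μ ∈ Icc lo hi := by
  haveI := h.1
  constructor
  · have := integral_mono_ae (integrable_const lo) (good_int_id h)
      (by filter_upwards [h.2] with x hx using hx.1)
    simpa [m1] using this
  · have := integral_mono_ae (good_int_id h) (integrable_const hi)
      (by filter_upwards [h.2] with x hx using hx.2)
    simpa [m1] using this

lemma int_fst {μ ν : Measure ℝ} [SFinite μ] [SFinite ν] [IsProbabilityMeasure ν]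
    (f : ℝ → ℝ) : ∫ p, f p.1 ∂(μ.prod ν) = ∫ x, f x ∂μ := by
  have := integral_prod_mul (μ := μ) (ν := ν) f (fun _ => (1 : ℝ))
  simpa using this

lemma int_snd {μ ν : Measure ℝ} [SFinite μ] [SFinite ν] [IsProbabilityMeasure μ]
    (f : ℝ → ℝ) : ∫ p, f p.2 ∂(μ.prod ν) = ∫ y, f y ∂ν := by
  have := integral_prod_mul (μ := μ) (ν := ν) (fun _ => (1 : ℝ)) f
  simpa using this

lemma kap_m1 {μ : Measure ℝ} {B : ℝ} (hg : Good 1 B μ) : m1 (kap μ) = 2 * m1 μ := by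
  haveI := hg.1
  have hbox := ae_prod_box hg.2 hg.2
  have if1 : Integrable (fun p : ℝ × ℝ => p.1) (μ.prod μ) :=
    integrable_of_ae_bdd measurable_fst.aestronglyMeasurable
      (C := max |1| |B|) (by filter_upwards [hbox] with p hp using abs_le_of_mem_Icc hp.1)
  have if2 : Integrable (fun p : ℝ × ℝ => p.2) (μ.prod μ) :=
    integrable_of_ae_bdd measurable_snd.aestronglyMeasurable
      (C := max |1| |B|) (by filter_upwards [hbox] with p hp using abs_le_of_mem_Icc hp.2)
  have : m1 (kap μ) = ∫ p : ℝ × ℝ, p.1 + p.2 ∂(μ.prod μ) := by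
    rw [m1, kap, integral_map (f := fun z : ℝ => z) meas_S.aemeasurable
      measurable_id.aestronglyMeasurable]
    simp only [Sfun]
  rw [this, integral_add if1 if2, int_fst (fun x : ℝ => x), int_snd (fun x : ℝ => x)]
  rw [m1]; ring

lemma kap_m2 {μ : Measure ℝ} {B : ℝ} (hg : Good 1 B μ) :
    m2 (kap μ) = 2 * m2 μ + 2 * (m1 μ) ^ 2 := by
  haveI := hg.1
  have hbox := ae_prod_box hg.2 hg.2
  have habs : ∀ {x : ℝ}, x ∈ Icc (1:ℝ) B → |x| ≤ max |1| |B| := fun hx => abs_le_of_mem_Icc hx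
  have if1 : Integrable (fun p : ℝ × ℝ => p.1 ^ 2) (μ.prod μ) :=
    integrable_of_ae_bdd (measurable_fst.pow_const 2).aestronglyMeasurable
      (C := (max |1| |B|) ^ 2) (by
        filter_upwards [hbox] with p hp
        rw [abs_pow]
        exact pow_le_pow_left₀ (abs_nonneg _) (habs hp.1) 2)
  have if2 : Integrable (fun p : ℝ × ℝ => p.2 ^ 2) (μ.prod μ) :=
    integrable_of_ae_bdd (measurable_snd.pow_const 2).aestronglyMeasurable
      (C := (max |1| |B|) ^ 2) (by
        filter_upwards [hbox] with p hp
        rw [abs_pow]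
        exact pow_le_pow_left₀ (abs_nonneg _) (habs hp.2) 2)
  have if3 : Integrable (fun p : ℝ × ℝ => 2 * (p.1 * p.2)) (μ.prod μ) :=
    (integrable_of_ae_bdd (measurable_fst.mul measurable_snd).aestronglyMeasurable
      (C := (max |1| |B|) ^ 2) (by
        filter_upwards [hbox] with p hp
        rw [Pi.mul_apply, abs_mul, sq]
        exact mul_le_mul (habs hp.1) (habs hp.2) (abs_nonneg _) (le_max_iff.2 (Or.inl (abs_nonneg _))))).const_mul 2
  have if12 : Integrable (fun p : ℝ × ℝ => p.1 ^ 2 + p.2 ^ 2) (μ.prod μ) := if1.add if2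
  have h0 : m2 (kap μ) = ∫ p : ℝ × ℝ, (p.1 + p.2) ^ 2 ∂(μ.prod μ) := by
    rw [m2, kap, integral_map (f := fun z : ℝ => z ^ 2) meas_S.aemeasurable
      (measurable_id.pow_const 2).aestronglyMeasurable]
    simp only [Sfun]
  have h1 : ∫ p : ℝ × ℝ, (p.1 + p.2) ^ 2 ∂(μ.prod μ)
      = ∫ p : ℝ × ℝ, (p.1 ^ 2 + p.2 ^ 2) + 2 * (p.1 * p.2) ∂(μ.prod μ) := by
    congr 1; funext p; ring
  have h2 := integral_prod_mul (μ := μ) (ν := μ) (fun x : ℝ => x) (fun x : ℝ => x)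
  rw [h0, h1, integral_add if12 if3, integral_add if1 if2,
    int_fst (fun x : ℝ => x ^ 2), int_snd (fun x : ℝ => x ^ 2), integral_const_mul, h2]
  rw [m2, m1]; ring

lemma par_mem {a b hi : ℝ} (ha : a ∈ Icc 2 hi) (hb : b ∈ Icc 2 hi) :
    Par (a, b) ∈ Icc 1 hi := by
  obtain ⟨ha1, ha2⟩ := ha; obtain ⟨hb1, hb2⟩ := hb
  have hab : 0 < a + b := by linarith
  constructor
  · rw [Par, le_div_iff₀ hab]
    show 1 * (a + b) ≤ a * b
    nlinarith
  · rw [Par, div_le_iff₀ hab]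
    show a * b ≤ hi * (a + b)
    nlinarith

lemma par_sq_le {a b : ℝ} (ha : 2 ≤ a) (hb : 2 ≤ b) :
    Par (a, b) ^ 2 ≤ a * b / 4 := by
  have hab : 0 < a + b := by linarith
  have hrw : Par (a, b) = a * b / (a + b) := rfl
  rw [hrw, div_pow, div_le_div_iff₀ (by positivity) (by norm_num)]
  nlinarith [sq_nonneg (a - b), mul_pos (by linarith : (0:ℝ) < a) (by linarith : (0:ℝ) < b)]

set_option maxHeartbeats 1000000 in
/-- All the statistics of the pair-sum measure and one-step Tq. -/
lemma moment_step {q B : ℝ} (hq0 : 0 ≤ q) (hq1 : q ≤ 1) {μ : Measure ℝ}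
    (hg : Good 1 B μ) (hB : 1 ≤ B) (hs : m2 μ ≤ 2 * (m1 μ) ^ 2) :
    Good 1 (2 * B) (Tq q μ) ∧
    (2 * (1 - q) + 2 / 3 * q) * m1 μ ≤ m1 (Tq q μ) ∧
    m2 (Tq q μ) ≤ (1 - q) * (2 * m2 μ + 2 * (m1 μ) ^ 2) + q * (m1 μ) ^ 2 := by
  haveI := hg.1
  set m := m1 μ with hm
  set s := m2 μ with hsdef
  have hm1 : 1 ≤ m := (good_m1_mem hg).1
  have hκg : Good 2 (2 * B) (kap μ) := by
    have := kap_good hg zero_le_one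
    rwa [mul_one] at this
  haveI := hκg.1
  set κ := kap μ with hκ
  have hM1 : m1 κ = 2 * m := kap_m1 hg
  have hM2 : m2 κ = 2 * s + 2 * m ^ 2 := kap_m2 hg
  have hbox2 : ∀ᵐ r ∂(κ.prod κ), r.1 ∈ Icc 2 (2 * B) ∧ r.2 ∈ Icc 2 (2 * B) :=
    ae_prod_box hκg.2 hκg.2
  -- integrability on κ × κ
  have C0 : (0:ℝ) ≤ 2 * B := by linarith
  have box_facts : ∀ r : ℝ × ℝ, r.1 ∈ Icc 2 (2*B) → r.2 ∈ Icc 2 (2*B) →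
      2 ≤ r.1 ∧ r.1 ≤ 2*B ∧ 2 ≤ r.2 ∧ r.2 ≤ 2*B := by
    intro r h1 h2; exact ⟨h1.1, h1.2, h2.1, h2.2⟩
  have iab : Integrable (fun r : ℝ × ℝ => r.1 * r.2) (κ.prod κ) := by
    refine integrable_of_ae_bdd (measurable_fst.mul measurable_snd).aestronglyMeasurable
      (C := (2*B)^2) ?_
    filter_upwards [hbox2] with r hr
    obtain ⟨h1, h2, h3, h4⟩ := box_facts r hr.1 hr.2
    rw [abs_of_nonneg (by nlinarith)]; nlinarith
  have ia2b : Integrable (fun r : ℝ × ℝ => r.1 ^ 2 * r.2) (κ.prod κ) := by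
    refine integrable_of_ae_bdd ((measurable_fst.pow_const 2).mul
      measurable_snd).aestronglyMeasurable (C := (2*B)^3) ?_
    filter_upwards [hbox2] with r hr
    obtain ⟨h1, h2, h3, h4⟩ := box_facts r hr.1 hr.2
    have e1 : r.1 ^ 2 ≤ (2*B) ^ 2 := by nlinarith
    rw [abs_of_nonneg (by nlinarith)]
    nlinarith [e1, mul_nonneg C0 C0]
  have iab2 : Integrable (fun r : ℝ × ℝ => r.1 * r.2 ^ 2) (κ.prod κ) := by
    refine integrable_of_ae_bdd (measurable_fst.mul
      (measurable_snd.pow_const 2)).aestronglyMeasurable (C := (2*B)^3) ?_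
    filter_upwards [hbox2] with r hr
    obtain ⟨h1, h2, h3, h4⟩ := box_facts r hr.1 hr.2
    have e1 : r.2 ^ 2 ≤ (2*B) ^ 2 := by nlinarith
    rw [abs_of_nonneg (by nlinarith)]
    nlinarith [e1, mul_nonneg C0 C0]
  have iPar : Integrable (fun r : ℝ × ℝ => Par r) (κ.prod κ) := by
    refine integrable_of_ae_bdd meas_Par.aestronglyMeasurable (C := 2*B) ?_
    filter_upwards [hbox2] with r hr
    have := par_mem hr.1 hr.2
    rw [abs_of_nonneg (by linarith [this.1])]
    exact this.2
  have iPar2 : Integrable (fun r : ℝ × ℝ => Par r ^ 2) (κ.prod κ) := by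
    refine integrable_of_ae_bdd (meas_Par.pow_const 2).aestronglyMeasurable
      (C := (2*B)^2) ?_
    filter_upwards [hbox2] with r hr
    have := par_mem hr.1 hr.2
    rw [abs_of_nonneg (sq_nonneg _)]
    nlinarith [this.1, this.2]
  have iG2' : Integrable (fun r : ℝ × ℝ => r.1 * r.2 * (r.1 + r.2)) (κ.prod κ) :=
    (ia2b.add iab2).congr (Filter.Eventually.of_forall fun r => by simp only [Pi.add_apply]; ring)
  -- moments over κ × κ
  have eab : ∫ r : ℝ × ℝ, r.1 * r.2 ∂(κ.prod κ) = (2*m)^2 := by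
    have := integral_prod_mul (μ := κ) (ν := κ) (fun x : ℝ => x) (fun x : ℝ => x)
    rw [this]
    show m1 κ * m1 κ = _
    rw [hM1]; ring
  have ea2b : ∫ r : ℝ × ℝ, r.1 ^ 2 * r.2 ∂(κ.prod κ) = (2*s+2*m^2) * (2*m) := by
    have := integral_prod_mul (μ := κ) (ν := κ) (fun x : ℝ => x ^ 2) (fun x : ℝ => x)
    rw [this]
    show m2 κ * m1 κ = _
    rw [hM1, hM2]
  have eab2 : ∫ r : ℝ × ℝ, r.1 * r.2 ^ 2 ∂(κ.prod κ) = (2*m) * (2*s+2*m^2) := by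
    have := integral_prod_mul (μ := κ) (ν := κ) (fun x : ℝ => x) (fun x : ℝ => x ^ 2)
    rw [this]
    show m1 κ * m2 κ = _
    rw [hM1, hM2]
  have eG2 : ∫ r : ℝ × ℝ, r.1 * r.2 * (r.1 + r.2) ∂(κ.prod κ)
      = 2 * ((2*s+2*m^2) * (2*m)) := by
    have hre : ∫ r : ℝ × ℝ, r.1 * r.2 * (r.1 + r.2) ∂(κ.prod κ)
        = ∫ r : ℝ × ℝ, r.1 ^ 2 * r.2 + r.1 * r.2 ^ 2 ∂(κ.prod κ) := by
      congr 1; funext r; ring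
    rw [hre, integral_add ia2b iab2, ea2b, eab2]; ring
  have hs0 : 0 ≤ s := by
    rw [hsdef, m2]
    exact integral_nonneg fun z => sq_nonneg z
  -- Cauchy–Schwarz lower bound for ∫ Par
  set P := ∫ r : ℝ × ℝ, Par r ∂(κ.prod κ) with hP
  have hP1 : 1 ≤ P := by
    have := integral_mono_ae (integrable_const (1:ℝ)) iPar
      (by filter_upwards [hbox2] with r hr using (par_mem hr.1 hr.2).1)
    simpa using this
  have epar_low : 2/3 * m ≤ P := by
    set F := fun r : ℝ × ℝ => Real.sqrt (Par r) with hF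
    set G := fun r : ℝ × ℝ => Real.sqrt (r.1 * r.2 * (r.1 + r.2)) with hG
    have hF2 : (fun r : ℝ × ℝ => F r ^ 2) =ᵐ[κ.prod κ] fun r : ℝ × ℝ => Par r := by
      filter_upwards [hbox2] with r hr
      exact Real.sq_sqrt (by linarith [(par_mem hr.1 hr.2).1])
    have hG2 : (fun r : ℝ × ℝ => G r ^ 2) =ᵐ[κ.prod κ]
        fun r : ℝ × ℝ => r.1 * r.2 * (r.1 + r.2) := by
      filter_upwards [hbox2] with r hr
      obtain ⟨h1, h2, h3, h4⟩ := box_facts r hr.1 hr.2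
      exact Real.sq_sqrt (le_of_lt (mul_pos (mul_pos (by linarith) (by linarith))
        (by linarith)))
    have hFG : (fun r : ℝ × ℝ => F r * G r) =ᵐ[κ.prod κ] fun r : ℝ × ℝ => r.1 * r.2 := by
      filter_upwards [hbox2] with r hr
      obtain ⟨h1, h2, h3, h4⟩ := box_facts r hr.1 hr.2
      have hab : (0:ℝ) < r.1 + r.2 := by linarith
      have hp : 0 ≤ Par r := by linarith [(par_mem hr.1 hr.2).1]
      rw [show F r * G r = Real.sqrt (Par r * (r.1 * r.2 * (r.1 + r.2))) from
        (Real.sqrt_mul hp _).symm]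
      have hiden : Par r * (r.1 * r.2 * (r.1 + r.2)) = (r.1 * r.2) ^ 2 := by
        rw [Par]
        field_simp
      rw [hiden, Real.sqrt_sq (le_of_lt (mul_pos (by linarith) (by linarith)))]
    have iF2 : Integrable (fun r : ℝ × ℝ => F r ^ 2) (κ.prod κ) := iPar.congr hF2.symm
    have iG2 : Integrable (fun r : ℝ × ℝ => G r ^ 2) (κ.prod κ) := iG2'.congr hG2.symm
    have iFG : Integrable (fun r : ℝ × ℝ => F r * G r) (κ.prod κ) := iab.congr hFG.symm
    have hcs := integral_cauchy_schwarz iF2 iG2 iFG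
    rw [integral_congr_ae hF2, integral_congr_ae hG2, integral_congr_ae hFG] at hcs
    rw [eab, eG2, ← hP] at hcs
    -- hcs : ((2m)^2)^2 ≤ P * (2*((2s+2m²)(2m)))
    have h24 : P * (2 * ((2*s+2*m^2) * (2*m))) ≤ P * (24 * m^3) := by
      apply mul_le_mul_of_nonneg_left ?_ (by linarith : (0:ℝ) ≤ P)
      nlinarith
    have h16 : 16 * m^4 ≤ P * (24 * m^3) := by nlinarith [hcs]
    have hm3 : (0:ℝ) < m^3 := by positivity
    nlinarith [h16, hm3]
  have epar2 : ∫ r : ℝ × ℝ, Par r ^ 2 ∂(κ.prod κ) ≤ m^2 := by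
    have hmono := integral_mono_ae iPar2 (iab.div_const 4)
      (by
        filter_upwards [hbox2] with r hr
        exact par_sq_le hr.1.1 hr.2.1)
    have hdiv : ∫ r : ℝ × ℝ, r.1 * r.2 / 4 ∂(κ.prod κ) = (2*m)^2 / 4 := by
      rw [integral_div, eab]
    rw [hdiv] at hmono
    nlinarith [hmono]
  -- mean and second moment of Tq
  haveI hprobmapPar : IsProbabilityMeasure (Measure.map Par (κ.prod κ)) :=
    Measure.isProbabilityMeasure_map meas_Par.aemeasurable
  have hq1t : ENNReal.ofReal (1 - q) ≠ ⊤ := ENNReal.ofReal_ne_top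
  have hqt : ENNReal.ofReal q ≠ ⊤ := ENNReal.ofReal_ne_top
  have int_formula : ∀ f : ℝ → ℝ, Measurable f → Integrable f κ →
      Integrable (fun r : ℝ × ℝ => f (Par r)) (κ.prod κ) →
      ∫ z, f z ∂(Tq q μ) = (1-q) * (∫ z, f z ∂κ)
        + q * ∫ r : ℝ × ℝ, f (Par r) ∂(κ.prod κ) := by
    intro f hfm hf1 hf2
    have hmapint : Integrable f (Measure.map Par (κ.prod κ)) :=
      (integrable_map_measure hfm.aestronglyMeasurable meas_Par.aemeasurable).2 hf2
    rw [Tq_eq]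
    rw [integral_add_measure (hf1.smul_measure hq1t) (hmapint.smul_measure hqt),
      integral_smul_measure, integral_smul_measure,
      ENNReal.toReal_ofReal (by linarith : (0:ℝ) ≤ 1 - q), ENNReal.toReal_ofReal hq0,
      integral_map meas_Par.aemeasurable hfm.aestronglyMeasurable]
    simp [smul_eq_mul]
  have mean_eq : m1 (Tq q μ) = (1-q) * (2*m) + q * P := by
    rw [m1, int_formula (fun z => z) measurable_id (good_int_id hκg) iPar, ← hM1]
    rfl
  have m2_eq : m2 (Tq q μ) = (1-q) * (2*s+2*m^2)
      + q * ∫ r : ℝ × ℝ, Par r ^ 2 ∂(κ.prod κ) := by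
    rw [m2, int_formula (fun z => z ^ 2) (measurable_id.pow_const 2) (good_int_sq hκg) iPar2,
      ← hM2]
    rfl
  refine ⟨?_, ?_, ?_⟩
  · refine ⟨Tq_prob q hq0 hq1 μ, ?_⟩
    rw [Tq_eq]
    rw [ae_add_measure_iff]
    constructor
    · apply Measure.ae_smul_measure
      filter_upwards [hκg.2] with x hx
      exact ⟨by linarith [hx.1], hx.2⟩
    · apply Measure.ae_smul_measure
      refine (ae_map_iff meas_Par.aemeasurable measurableSet_Icc).2 ?_
      filter_upwards [hbox2] with r hr
      exact par_mem hr.1 hr.2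
  · rw [mean_eq]
    nlinarith [epar_low, hq0]
  · rw [m2_eq]
    nlinarith [epar2, hq0]

namespace StmtAux

noncomputable def q0 : ℝ := Real.sqrt 5 - 2
noncomputable def c0 : ℝ := (14 - 4 * Real.sqrt 5) / 3

lemma h5 : Real.sqrt 5 ^ 2 = 5 := Real.sq_sqrt (by norm_num)
lemma h5lb : 2.2 ≤ Real.sqrt 5 := by nlinarith [h5, Real.sqrt_nonneg 5]
lemma h5ub : Real.sqrt 5 ≤ 2.3 := by nlinarith [h5, Real.sqrt_nonneg 5]

lemma hq0 : 0 ≤ q0 := by rw [q0]; linarith [h5lb]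
lemma hq1 : q0 ≤ 1 := by rw [q0]; linarith [h5ub]
lemma hc_eq : 2 * (1 - q0) + 2 / 3 * q0 = c0 := by rw [q0, c0]; ring
lemma hc1 : 1 < c0 := by rw [c0]; linarith [h5ub]
lemma hc0 : 0 ≤ c0 := by linarith [hc1]
lemma key2 : 6 - 5 * q0 ≤ 2 * c0 ^ 2 := by
  rw [q0, c0]
  nlinarith [h5, h5lb, h5ub]

lemma mu_succ (q : ℝ) (n : ℕ) : mu q (n + 1) = Tq q (mu q n) := by
  rw [mu, mu, Function.iterate_succ_apply']

lemma mu_zero (q : ℝ) : mu q 0 = Measure.dirac 1 := rfl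

lemma mu_invariant (n : ℕ) :
    Good 1 (2 ^ n) (mu q0 n) ∧ m2 (mu q0 n) ≤ 2 * (m1 (mu q0 n)) ^ 2 ∧
      c0 ^ n ≤ m1 (mu q0 n) := by
  induction n with
  | zero =>
    have hm1 : m1 (mu q0 0) = 1 := by
      rw [mu_zero, m1, integral_dirac (fun z : ℝ => z) 1]
    have hm2 : m2 (mu q0 0) = 1 := by
      rw [mu_zero, m2, integral_dirac (fun z : ℝ => z ^ 2) 1]
      norm_num
    refine ⟨⟨?_, ?_⟩, ?_, ?_⟩
    · rw [mu_zero]; infer_instance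
    · rw [mu_zero]
      refine (ae_dirac_iff ?_).2 ?_
      · exact measurableSet_Icc
      · norm_num
    · rw [hm1, hm2]; norm_num
    · rw [hm1]; norm_num
  | succ n ih =>
    obtain ⟨hgood, hvar, hlow⟩ := ih
    have hB : (1:ℝ) ≤ 2 ^ n := one_le_pow₀ (by norm_num)
    have hstep := moment_step hq0 hq1 hgood hB hvar
    obtain ⟨hgood', hmean, hm2'⟩ := hstep
    have hm : 1 ≤ m1 (mu q0 n) := (good_m1_mem hgood).1
    rw [← mu_succ] at hgood' hmean hm2'
    have hmean' : c0 * m1 (mu q0 n) ≤ m1 (mu q0 (n + 1)) := by rwa [hc_eq] at hmean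
    refine ⟨?_, ?_, ?_⟩
    · have : (2:ℝ) * 2 ^ n = 2 ^ (n + 1) := by ring
      rwa [this] at hgood'
    · have e2 := key2
      have hq1' : q0 ≤ 1 := hq1
      have hq0' : 0 ≤ q0 := hq0
      nlinarith [hm2', hvar, hmean', hm, hc0, mul_nonneg hc0 (by linarith : (0:ℝ) ≤ m1 (mu q0 n)), sq_nonneg (m1 (mu q0 n))]
    · calc c0 ^ (n + 1) = c0 * c0 ^ n := by ring
        _ ≤ c0 * m1 (mu q0 n) := by
            exact mul_le_mul_of_nonneg_left hlow hc0
        _ ≤ m1 (mu q0 (n + 1)) := hmean'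


/-- Test class: measurable, monotone and concave on [0,∞). -/
def Nice (f : ℝ → ℝ) : Prop :=
  Measurable f ∧ MonotoneOn f (Ici 0) ∧ ConcaveOn ℝ (Ici 0) f

/-- increasing concave order restricted to our test class -/
def IcvLe (μ ν : Measure ℝ) : Prop :=
  ∀ f : ℝ → ℝ, Nice f → ∫ z, f z ∂μ ≤ ∫ z, f z ∂ν

lemma nice_id : Nice (fun z : ℝ => z) :=
  ⟨measurable_id, fun _ _ _ _ h => h, concaveOn_id (convex_Ici 0)⟩

lemma nice_int {μ : Measure ℝ} {lo hi : ℝ} (h : Good lo hi μ) (h0 : 0 ≤ lo) {f : ℝ → ℝ}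
    (hf : Nice f) : Integrable f μ := by
  refine good_int h hf.1.aestronglyMeasurable (C := max |f lo| |f hi|) fun x hx => ?_
  have hx0 : x ∈ Ici (0:ℝ) := le_trans h0 hx.1
  exact abs_le_max_abs_abs (hf.2.1 (mem_Ici.2 h0) hx0 hx.1)
    (hf.2.1 hx0 (mem_Ici.2 (le_trans h0 (le_trans hx.1 hx.2))) hx.2)

lemma good_ae_const {μ : Measure ℝ} {lo hi c : ℝ} (h : Good lo hi μ)
    (hc : m1 μ = c) (hcase : (∀ᵐ z ∂μ, c ≤ z) ∨ (∀ᵐ z ∂μ, z ≤ c)) :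
    ∀ᵐ z ∂μ, z = c := by
  haveI := h.1
  rw [m1] at hc
  rcases hcase with hge | hle
  · have hint : Integrable (fun z : ℝ => z - c) μ := (good_int_id h).sub (integrable_const c)
    have hz : ∫ z, (z - c) ∂μ = 0 := by
      rw [integral_sub (good_int_id h) (integrable_const c), hc]
      simp
    have := (integral_eq_zero_iff_of_nonneg_ae
      (by filter_upwards [hge] with z hz using by simp only [Pi.zero_apply]; linarith) hint).1 hz
    filter_upwards [this] with z hz
    simp only [Pi.zero_apply] at hz
    linarith
  · have hint : Integrable (fun z : ℝ => c - z) μ := (integrable_const c).sub (good_int_id h)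
    have hz : ∫ z, (c - z) ∂μ = 0 := by
      rw [integral_sub (integrable_const c) (good_int_id h), hc]
      simp
    have := (integral_eq_zero_iff_of_nonneg_ae
      (by filter_upwards [hle] with z hz using by simp only [Pi.zero_apply]; linarith) hint).1 hz
    filter_upwards [this] with z hz
    simp only [Pi.zero_apply] at hz
    linarith

lemma jensen_icv {μ : Measure ℝ} {lo hi : ℝ} (h : Good lo hi μ) (h0 : 0 ≤ lo) :
    IcvLe μ (Measure.dirac (m1 μ)) := by
  intro f hf
  haveI := h.1
  have hm := good_m1_mem h
  have hint : Integrable f μ := nice_int h h0 hf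
  rw [integral_dirac]
  set M := m1 μ with hM
  by_cases hlo : M ≤ lo
  · have hMeq : M = lo := le_antisymm hlo hm.1
    have hconst : ∀ᵐ z ∂μ, z = M :=
      good_ae_const h rfl (Or.inl (by filter_upwards [h.2] with z hz using hMeq ▸ hz.1))
    have : ∫ z, f z ∂μ = ∫ _, f M ∂μ :=
      integral_congr_ae (by filter_upwards [hconst] with z hz using by rw [hz])
    rw [this]; simp
  by_cases hhi : hi ≤ M
  · have hMeq : M = hi := le_antisymm hm.2 hhi
    have hconst : ∀ᵐ z ∂μ, z = M :=
      good_ae_const h rfl (Or.inr (by filter_upwards [h.2] with z hz using hMeq ▸ hz.2))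
    have : ∫ z, f z ∂μ = ∫ _, f M ∂μ :=
      integral_congr_ae (by filter_upwards [hconst] with z hz using by rw [hz])
    rw [this]; simp
  push_neg at hlo hhi
  -- lo < M < hi : supporting-line argument
  have hM0 : M ∈ Ici (0:ℝ) := le_trans h0 hm.1
  set Sl := (fun y => (f y - f M) / (y - M)) '' Ioc M hi with hSl
  have hne : Sl.Nonempty := ⟨_, ⟨hi, ⟨hhi, le_refl hi⟩, rfl⟩⟩
  have hbdd : BddAbove Sl := by
    refine ⟨(f M - f lo) / (M - lo), ?_⟩
    rintro v ⟨y, ⟨hy1, hy2⟩, rfl⟩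
    exact hf.2.2.slope_anti_adjacent (mem_Ici.2 h0)
      (mem_Ici.2 (le_trans h0 (le_trans hm.1 (le_of_lt hy1)))) hlo hy1
  set σ := sSup Sl with hσ
  have key : ∀ x, x ∈ Icc lo hi → f x ≤ f M + σ * (x - M) := by
    intro x hx
    have hx0 : x ∈ Ici (0:ℝ) := le_trans h0 hx.1
    rcases lt_trichotomy x M with hlt | heq | hgt
    · have hub : ∀ v ∈ Sl, v ≤ (f M - f x) / (M - x) := by
        rintro v ⟨y, ⟨hy1, hy2⟩, rfl⟩
        exact hf.2.2.slope_anti_adjacent hx0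
          (mem_Ici.2 (le_trans h0 (le_trans hm.1 (le_of_lt hy1)))) hlt hy1
      have hσle : σ ≤ (f M - f x) / (M - x) := csSup_le hne hub
      have hMx : (0:ℝ) < M - x := by linarith
      have := (le_div_iff₀ hMx).1 hσle
      nlinarith [this]
    · rw [heq]; simp
    · have hmem : (f x - f M) / (x - M) ∈ Sl := ⟨x, ⟨hgt, hx.2⟩, rfl⟩
      have hle : (f x - f M) / (x - M) ≤ σ := le_csSup hbdd hmem
      have hxM : (0:ℝ) < x - M := by linarith
      have := (div_le_iff₀ hxM).1 hle
      linarith [this]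
  have hsub : Integrable (fun x : ℝ => x - M) μ := (good_int_id h).sub (integrable_const M)
  have haff2 : Integrable (fun x : ℝ => σ * (x - M)) μ := hsub.const_mul σ
  have haff : Integrable (fun x : ℝ => f M + σ * (x - M)) μ :=
    (integrable_const (f M)).add haff2
  have hmono := integral_mono_ae hint haff
    (by filter_upwards [h.2] with x hx using key x hx)
  have hval : ∫ x, (f M + σ * (x - M)) ∂μ = f M := by
    rw [integral_add (integrable_const (f M)) haff2,
      integral_const_mul, integral_sub (good_int_id h) (integrable_const M)]
    have : (∫ x, x ∂μ) = M := rfl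
    rw [this]
    simp
  rw [hval] at hmono
  exact hmono

lemma nice_const (c : ℝ) : Nice (fun _ : ℝ => c) :=
  ⟨measurable_const, monotoneOn_const, concaveOn_const c (convex_Ici 0)⟩

lemma nice_param {ν : Measure ℝ} [IsProbabilityMeasure ν] {lo hi : ℝ} (h0 : 0 ≤ lo)
    (hν : ∀ᵐ y ∂ν, y ∈ Icc lo hi)
    (F : ℝ → ℝ → ℝ) (hFm : Measurable fun p : ℝ × ℝ => F p.1 p.2)
    (h1 : ∀ y ∈ Icc lo hi, Nice (fun x => F x y))
    (h2 : ∀ x ∈ Ici (0:ℝ), Nice (fun y => F x y)) :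
    Nice (fun x => ∫ y, F x y ∂ν) := by
  have int_y : ∀ x ∈ Ici (0:ℝ), Integrable (fun y => F x y) ν := by
    intro x hx
    refine integrable_of_ae_bdd (h2 x hx).1.aestronglyMeasurable
      (C := max |F x lo| |F x hi|) ?_
    filter_upwards [hν] with y hy
    have hlo0 : lo ∈ Ici (0:ℝ) := mem_Ici.2 h0
    have hy0 : y ∈ Ici (0:ℝ) := mem_Ici.2 (le_trans h0 hy.1)
    have hhi0 : hi ∈ Ici (0:ℝ) := mem_Ici.2 (le_trans h0 (le_trans hy.1 hy.2))
    exact abs_le_max_abs_abs ((h2 x hx).2.1 hlo0 hy0 hy.1) ((h2 x hx).2.1 hy0 hhi0 hy.2)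
  refine ⟨?_, ?_, ?_⟩
  · exact (hFm.stronglyMeasurable.integral_prod_right (ν := ν)).measurable
  · intro x hx x' hx' hxx'
    refine integral_mono_ae (int_y x hx) (int_y x' hx') ?_
    filter_upwards [hν] with y hy
    exact (h1 y hy).2.1 hx hx' hxx'
  · refine ⟨convex_Ici 0, ?_⟩
    intro x hx z hz a b ha hb hab
    have hxz : a • x + b • z ∈ Ici (0:ℝ) := by
      simp only [smul_eq_mul, mem_Ici]
      have := mem_Ici.1 hx; have := mem_Ici.1 hz
      positivity
    have icomb : Integrable (fun y => a * F x y + b * F z y) ν :=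
      ((int_y x hx).const_mul a).add ((int_y z hz).const_mul b)
    have hpt : ∀ᵐ y ∂ν, a * F x y + b * F z y ≤ F (a • x + b • z) y := by
      filter_upwards [hν] with y hy
      have := (h1 y hy).2.2.2 hx hz ha hb hab
      simpa [smul_eq_mul] using this
    have := integral_mono_ae icomb (int_y _ hxz) hpt
    rw [integral_add ((int_y x hx).const_mul a) ((int_y z hz).const_mul b),
      integral_const_mul, integral_const_mul] at this
    simpa [smul_eq_mul] using this

set_option maxHeartbeats 800000 in
lemma swap2 {μ ν : Measure ℝ} [IsProbabilityMeasure μ] [IsProbabilityMeasure ν]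
    {lo hi : ℝ} (h0 : 0 ≤ lo)
    (hμ : ∀ᵐ x ∂μ, x ∈ Icc lo hi) (hν : ∀ᵐ x ∂ν, x ∈ Icc lo hi)
    (hle : IcvLe μ ν)
    (F : ℝ → ℝ → ℝ) (hFm : Measurable fun p : ℝ × ℝ => F p.1 p.2)
    (h1 : ∀ y ∈ Icc lo hi, Nice (fun x => F x y))
    (h2 : ∀ x ∈ Ici (0:ℝ), Nice (fun y => F x y)) :
    ∫ p, F p.1 p.2 ∂(μ.prod μ) ≤ ∫ p, F p.1 p.2 ∂(ν.prod ν) := by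
  have hlo0 : lo ∈ Ici (0:ℝ) := mem_Ici.2 h0
  have box_mem : ∀ {x : ℝ}, x ∈ Icc lo hi → x ∈ Ici (0:ℝ) :=
    fun hx => mem_Ici.2 (le_trans h0 hx.1)
  have hhi0 : hi ∈ Ici (0:ℝ) := by
    obtain ⟨x, hx⟩ : ∃ x, x ∈ Icc lo hi := hμ.exists
    exact mem_Ici.2 (le_trans h0 (le_trans hx.1 hx.2))
  -- uniform bound on the box
  set C := max |F lo lo| |F hi hi| with hC
  have hbd : ∀ {x y : ℝ}, x ∈ Icc lo hi → y ∈ Icc lo hi → |F x y| ≤ C := by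
    intro x y hx hy
    have l1 : F lo lo ≤ F x lo := (h1 lo ⟨le_refl lo, le_trans hx.1 hx.2⟩).2.1 hlo0 (box_mem hx) hx.1
    have l2 : F x lo ≤ F x y := (h2 x (box_mem hx)).2.1 hlo0 (box_mem hy) hy.1
    have l3 : F x y ≤ F x hi := (h2 x (box_mem hx)).2.1 (box_mem hy) hhi0 hy.2
    have l4 : F x hi ≤ F hi hi := (h1 hi ⟨le_trans hy.1 hy.2, le_refl hi⟩).2.1 (box_mem hx) hhi0 hx.2
    exact abs_le_max_abs_abs (by linarith) (by linarith)
  have int_y : ∀ (ρ : Measure ℝ) [IsProbabilityMeasure ρ], (∀ᵐ x ∂ρ, x ∈ Icc lo hi) →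
      ∀ x ∈ Ici (0:ℝ), Integrable (fun y => F x y) ρ := by
    intro ρ _ hρ x hx
    refine integrable_of_ae_bdd (h2 x hx).1.aestronglyMeasurable
      (C := max |F x lo| |F x hi|) ?_
    filter_upwards [hρ] with y hy
    exact abs_le_max_abs_abs ((h2 x hx).2.1 hlo0 (box_mem hy) hy.1)
      ((h2 x hx).2.1 (box_mem hy) hhi0 hy.2)
  have joint : ∀ (ρ τ : Measure ℝ) [IsProbabilityMeasure ρ] [IsProbabilityMeasure τ],
      (∀ᵐ x ∂ρ, x ∈ Icc lo hi) → (∀ᵐ x ∂τ, x ∈ Icc lo hi) →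
      Integrable (fun p : ℝ × ℝ => F p.1 p.2) (ρ.prod τ) := by
    intro ρ τ _ _ hρ hτ
    refine integrable_of_ae_bdd hFm.aestronglyMeasurable (C := C) ?_
    filter_upwards [ae_prod_box hρ hτ] with p hp
    exact hbd hp.1 hp.2
  have intI : ∀ (ρ : Measure ℝ) [IsProbabilityMeasure ρ], (∀ᵐ x ∂ρ, x ∈ Icc lo hi) →
      Integrable (fun x => ∫ y, F x y ∂ρ) μ ∧ Integrable (fun x => ∫ y, F x y ∂ρ) ν := by
    intro ρ _ hρ
    have hmeas : Measurable fun x => ∫ y, F x y ∂ρ :=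
      (hFm.stronglyMeasurable.integral_prod_right (ν := ρ)).measurable
    have hb : ∀ {x : ℝ}, x ∈ Icc lo hi → |∫ y, F x y ∂ρ| ≤ C := by
      intro x hx
      rw [← Real.norm_eq_abs]
      calc ‖∫ y, F x y ∂ρ‖ ≤ C * (ρ univ).toReal := by
            refine norm_integral_le_of_norm_le_const ?_
            filter_upwards [hρ] with y hy
            rw [Real.norm_eq_abs]
            exact hbd hx hy
        _ = C := by simp
    exact ⟨integrable_of_ae_bdd hmeas.aestronglyMeasurable
        (by filter_upwards [hμ] with x hx using hb hx),
      integrable_of_ae_bdd hmeas.aestronglyMeasurable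
        (by filter_upwards [hν] with x hx using hb hx)⟩
  -- step 1 : swap inner coordinate
  have step1 : ∫ p, F p.1 p.2 ∂(μ.prod μ) ≤ ∫ x, (∫ y, F x y ∂ν) ∂μ := by
    rw [integral_prod _ (joint μ μ hμ hμ)]
    refine integral_mono_ae ((intI μ hμ).1) ((intI ν hν).1) ?_
    filter_upwards [hμ] with x hx
    exact hle _ (h2 x (box_mem hx))
  -- step 2 : swap outer coordinate
  have hGnice : Nice (fun x => ∫ y, F x y ∂ν) := nice_param h0 hν F hFm h1 h2
  have step2 : ∫ x, (∫ y, F x y ∂ν) ∂μ ≤ ∫ x, (∫ y, F x y ∂ν) ∂ν := hle _ hGnice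
  have step3 : ∫ x, (∫ y, F x y ∂ν) ∂ν = ∫ p, F p.1 p.2 ∂(ν.prod ν) :=
    (integral_prod _ (joint ν ν hν hν)).symm
  linarith [step1, step2, step3]

lemma nice_shift {f : ℝ → ℝ} (hf : Nice f) {y : ℝ} (hy : 0 ≤ y) :
    Nice (fun x => f (x + y)) := by
  refine ⟨hf.1.comp (measurable_id.add_const y), ?_, ⟨convex_Ici 0, ?_⟩⟩
  · intro a ha b hb hab
    exact hf.2.1 (mem_Ici.2 (by linarith [mem_Ici.1 ha])) (mem_Ici.2 (by linarith [mem_Ici.1 hb]))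
      (by linarith)
  · intro x hx z hz a b ha hb hab
    have h1 : x + y ∈ Ici (0:ℝ) := mem_Ici.2 (by linarith [mem_Ici.1 hx])
    have h2 : z + y ∈ Ici (0:ℝ) := mem_Ici.2 (by linarith [mem_Ici.1 hz])
    have := hf.2.2.2 h1 h2 ha hb hab
    have harg : a • (x + y) + b • (z + y) = a • x + b • z + y := by
      simp only [smul_eq_mul]
      linear_combination y * hab
    rwa [harg] at this

lemma par_apply (a b : ℝ) : Par (a, b) = a * b / (a + b) := rfl

lemma par_comm (a b : ℝ) : Par (a, b) = Par (b, a) := by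
  rw [par_apply, par_apply, mul_comm, add_comm]

lemma nice_par_right {f : ℝ → ℝ} (hf : Nice f) {b : ℝ} (hb : 0 ≤ b) :
    Nice (fun a => f (Par (a, b))) := by
  rcases eq_or_lt_of_le hb with hb0 | hbpos
  · have : (fun a : ℝ => f (Par (a, b))) = fun _ : ℝ => f 0 := by
      funext a
      rw [par_apply, ← hb0]
      norm_num
    rw [this]
    exact nice_const (f 0)
  refine ⟨hf.1.comp (meas_Par.comp (measurable_id.prodMk measurable_const)), ?_, ⟨convex_Ici 0, ?_⟩⟩
  · intro a ha a' ha' haa'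
    have ha0 := mem_Ici.1 ha
    have ha'0 := mem_Ici.1 ha'
    have hd1 : (0:ℝ) < a + b := by linarith
    have hd2 : (0:ℝ) < a' + b := by linarith
    have hP : Par (a, b) ≤ Par (a', b) := by
      rw [par_apply, par_apply, div_le_div_iff₀ hd1 hd2]
      nlinarith [mul_nonneg (mul_pos hbpos hbpos).le (sub_nonneg.2 haa')]
    exact hf.2.1 (mem_Ici.2 (by rw [par_apply]; exact div_nonneg (mul_nonneg ha0 hb) hd1.le))
      (mem_Ici.2 (by rw [par_apply]; exact div_nonneg (mul_nonneg ha'0 hb) hd2.le)) hP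
  · intro x hx z hz α β hα hβ hαβ
    have hx0 := mem_Ici.1 hx
    have hz0 := mem_Ici.1 hz
    have hβ' : β = 1 - α := by linarith
    subst hβ'
    have hd1 : (0:ℝ) < x + b := by linarith
    have hd2 : (0:ℝ) < z + b := by linarith
    have hd3 : (0:ℝ) < (α * x + (1 - α) * z) + b := by
      nlinarith [mul_nonneg hα hx0, mul_nonneg hβ hz0]
    have hPx : Par (x, b) ∈ Ici (0:ℝ) := mem_Ici.2
      (by rw [par_apply]; exact div_nonneg (mul_nonneg hx0 hb) hd1.le)
    have hPz : Par (z, b) ∈ Ici (0:ℝ) := mem_Ici.2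
      (by rw [par_apply]; exact div_nonneg (mul_nonneg hz0 hb) hd2.le)
    have hβ0 : (0:ℝ) ≤ 1 - α := hβ
    have hnum : 0 ≤ α * (1 - α) * b ^ 2 * (x - z) ^ 2 :=
      mul_nonneg (mul_nonneg (mul_nonneg hα hβ0) (sq_nonneg b)) (sq_nonneg (x - z))
    have hcomb0 : (0:ℝ) ≤ α * x + (1 - α) * z :=
      add_nonneg (mul_nonneg hα hx0) (mul_nonneg hβ0 hz0)
    have hParConc : α • Par (x, b) + (1 - α) • Par (z, b) ≤ Par (α • x + (1 - α) • z, b) := by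
      have expand : Par (α • x + (1 - α) • z, b) - (α • Par (x, b) + (1 - α) • Par (z, b))
          = (α * (1 - α) * b ^ 2 * (x - z) ^ 2)
            / ((x + b) * (z + b) * ((α * x + (1 - α) * z) + b)) := by
        simp only [smul_eq_mul, par_apply]
        field_simp
        ring
      have hpos : 0 ≤ (α * (1 - α) * b ^ 2 * (x - z) ^ 2)
          / ((x + b) * (z + b) * ((α * x + (1 - α) * z) + b)) :=
        div_nonneg hnum (by positivity)
      linarith [expand ▸ hpos]
    have hPcomb : Par (α • x + (1 - α) • z, b) ∈ Ici (0:ℝ) := by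
      refine mem_Ici.2 ?_
      simp only [smul_eq_mul, par_apply]
      exact div_nonneg (mul_nonneg hcomb0 hb) (by linarith)
    have hmix : α • Par (x, b) + (1 - α) • Par (z, b) ∈ Ici (0:ℝ) := by
      refine mem_Ici.2 ?_
      simp only [smul_eq_mul]
      exact add_nonneg (mul_nonneg hα (mem_Ici.1 hPx)) (mul_nonneg hβ0 (mem_Ici.1 hPz))
    calc α • f (Par (x, b)) + (1 - α) • f (Par (z, b))
        ≤ f (α • Par (x, b) + (1 - α) • Par (z, b)) := hf.2.2.2 hPx hPz hα hβ0 hαβ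
      _ ≤ f (Par (α • x + (1 - α) • z, b)) := hf.2.1 hmix hPcomb hParConc

lemma nice_par_left {f : ℝ → ℝ} (hf : Nice f) {a : ℝ} (ha : 0 ≤ a) :
    Nice (fun b => f (Par (a, b))) := by
  have : (fun b : ℝ => f (Par (a, b))) = fun b : ℝ => f (Par (b, a)) := by
    funext b
    rw [par_comm]
  rw [this]
  exact nice_par_right hf ha

lemma par_mem' {a b hi : ℝ} (ha : a ∈ Icc 0 hi) (hb : b ∈ Icc 0 hi) :
    Par (a, b) ∈ Icc 0 hi := by
  obtain ⟨ha0, ha1⟩ := ha; obtain ⟨hb0, hb1⟩ := hb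
  rcases eq_or_lt_of_le (add_nonneg ha0 hb0) with h | h
  · have ha' : a = 0 := by linarith
    have hb' : b = 0 := by linarith
    subst ha'; subst hb'
    have hz : Par ((0:ℝ), (0:ℝ)) = 0 := by rw [par_apply]; norm_num
    rw [hz]
    exact ⟨le_rfl, by linarith⟩
  · constructor
    · rw [par_apply]
      exact div_nonneg (mul_nonneg ha0 hb0) (le_of_lt h)
    · rw [par_apply, div_le_iff₀ h]
      nlinarith

lemma integral_Tq {q : ℝ} (hq0 : 0 ≤ q) (hq1 : q ≤ 1) (μ : Measure ℝ)
    [IsProbabilityMeasure μ] {f : ℝ → ℝ} (hfm : Measurable f)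
    (hf1 : Integrable f (kap μ))
    (hf2 : Integrable (fun r : ℝ × ℝ => f (Par r)) ((kap μ).prod (kap μ))) :
    ∫ z, f z ∂(Tq q μ) = (1 - q) * (∫ z, f z ∂(kap μ))
      + q * ∫ r : ℝ × ℝ, f (Par r) ∂((kap μ).prod (kap μ)) := by
  have hmapint : Integrable f (Measure.map Par ((kap μ).prod (kap μ))) :=
    (integrable_map_measure hfm.aestronglyMeasurable meas_Par.aemeasurable).2 hf2
  rw [Tq_eq]
  rw [integral_add_measure (hf1.smul_measure ENNReal.ofReal_ne_top)
      (hmapint.smul_measure ENNReal.ofReal_ne_top),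
    integral_smul_measure, integral_smul_measure,
    ENNReal.toReal_ofReal (by linarith : (0:ℝ) ≤ 1 - q), ENNReal.toReal_ofReal hq0,
    integral_map meas_Par.aemeasurable hfm.aestronglyMeasurable]
  simp [smul_eq_mul]

lemma good_Tq {q B : ℝ} (hq0 : 0 ≤ q) (hq1 : q ≤ 1) {μ : Measure ℝ}
    (hg : Good 1 B μ) (hB : 1 ≤ B) : Good 1 (2 * B) (Tq q μ) := by
  haveI := hg.1
  have hκg : Good 2 (2 * B) (kap μ) := by
    have := kap_good hg zero_le_one
    rwa [mul_one] at this
  haveI := hκg.1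
  have hbox2 := ae_prod_box hκg.2 hκg.2
  refine ⟨Tq_prob q hq0 hq1 μ, ?_⟩
  rw [Tq_eq, ae_add_measure_iff]
  constructor
  · apply Measure.ae_smul_measure
    filter_upwards [hκg.2] with x hx
    exact ⟨by linarith [hx.1], hx.2⟩
  · apply Measure.ae_smul_measure
    refine (ae_map_iff meas_Par.aemeasurable measurableSet_Icc).2 ?_
    filter_upwards [hbox2] with r hr
    exact par_mem hr.1 hr.2

lemma icvLe_kap {μ ν : Measure ℝ} {lo hi : ℝ} (h0 : 0 ≤ lo)
    (hμ : Good lo hi μ) (hν : Good lo hi ν) (hle : IcvLe μ ν) :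
    IcvLe (kap μ) (kap ν) := by
  intro f hf
  haveI := hμ.1; haveI := hν.1
  rw [kap, integral_map meas_S.aemeasurable hf.1.aestronglyMeasurable,
    kap, integral_map meas_S.aemeasurable hf.1.aestronglyMeasurable]
  have h1 : ∀ y ∈ Icc lo hi, Nice (fun x => f (x + y)) :=
    fun y hy => nice_shift hf (le_trans h0 hy.1)
  have h2 : ∀ x ∈ Ici (0:ℝ), Nice (fun y => f (x + y)) := by
    intro x hx
    have heq : (fun y => f (x + y)) = fun y => f (y + x) := by
      funext y; rw [add_comm]
    rw [heq]
    exact nice_shift hf (mem_Ici.1 hx)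
  exact swap2 h0 hμ.2 hν.2 hle (fun x y => f (x + y))
    (hf.1.comp (measurable_fst.add measurable_snd)) h1 h2

lemma icvLe_Tq {q : ℝ} (hq0 : 0 ≤ q) (hq1 : q ≤ 1) {μ ν : Measure ℝ} {B : ℝ}
    (hμ : Good 1 B μ) (hν : Good 1 B ν) (hB : 1 ≤ B) (hle : IcvLe μ ν) :
    IcvLe (Tq q μ) (Tq q ν) := by
  intro f hf
  haveI := hμ.1; haveI := hν.1
  have hκμ : Good 2 (2 * B) (kap μ) := by
    have := kap_good hμ zero_le_one; rwa [mul_one] at this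
  have hκν : Good 2 (2 * B) (kap ν) := by
    have := kap_good hν zero_le_one; rwa [mul_one] at this
  haveI := hκμ.1; haveI := hκν.1
  have hκle : IcvLe (kap μ) (kap ν) := icvLe_kap zero_le_one hμ hν hle
  have hParm : Measurable (fun r : ℝ × ℝ => f (Par r)) := hf.1.comp meas_Par
  have intPar : ∀ (ρ : Measure ℝ) [IsProbabilityMeasure ρ], (∀ᵐ x ∂ρ, x ∈ Icc 2 (2*B)) →
      Integrable (fun r : ℝ × ℝ => f (Par r)) (ρ.prod ρ) := by
    intro ρ _ hρ
    refine integrable_of_ae_bdd hParm.aestronglyMeasurable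
      (C := max |f 0| |f (2*B)|) ?_
    filter_upwards [ae_prod_box hρ hρ] with r hr
    have hmem : Par (r.1, r.2) ∈ Icc 0 (2*B) :=
      par_mem' ⟨by linarith [hr.1.1], hr.1.2⟩ ⟨by linarith [hr.2.1], hr.2.2⟩
    exact abs_le_max_abs_abs (hf.2.1 (mem_Ici.2 le_rfl) (mem_Ici.2 hmem.1) hmem.1)
      (hf.2.1 (mem_Ici.2 hmem.1) (mem_Ici.2 (by linarith : (0:ℝ) ≤ 2*B)) hmem.2)
  have e1 := integral_Tq hq0 hq1 μ hf.1 (nice_int hκμ (by norm_num) hf) (intPar _ hκμ.2)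
  have e2 := integral_Tq hq0 hq1 ν hf.1 (nice_int hκν (by norm_num) hf) (intPar _ hκν.2)
  rw [e1, e2]
  have hterm1 : ∫ z, f z ∂(kap μ) ≤ ∫ z, f z ∂(kap ν) := hκle f hf
  have hterm2 : ∫ r : ℝ × ℝ, f (Par r) ∂((kap μ).prod (kap μ))
      ≤ ∫ r : ℝ × ℝ, f (Par r) ∂((kap ν).prod (kap ν)) := by
    have h1 : ∀ b ∈ Icc (2:ℝ) (2*B), Nice (fun a => f (Par (a, b))) :=
      fun b hb => nice_par_right hf (by linarith [hb.1])
    have h2 : ∀ a ∈ Ici (0:ℝ), Nice (fun b => f (Par (a, b))) :=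
      fun a ha => nice_par_left hf (mem_Ici.1 ha)
    exact swap2 (by norm_num) hκμ.2 hκν.2 hκle (fun a b => f (Par (a, b)))
      hParm h1 h2
  have h1q : (0:ℝ) ≤ 1 - q := by linarith
  exact add_le_add (mul_le_mul_of_nonneg_left hterm1 h1q)
    (mul_le_mul_of_nonneg_left hterm2 hq0)

lemma icvLe_iter {q : ℝ} (hq0 : 0 ≤ q) (hq1 : q ≤ 1) (n : ℕ) :
    ∀ {μ ν : Measure ℝ} {B : ℝ}, Good 1 B μ → Good 1 B ν → 1 ≤ B → IcvLe μ ν →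
    IcvLe ((Tq q)^[n] μ) ((Tq q)^[n] ν) := by
  induction n with
  | zero => intro μ ν B hμ hν hB hle; simpa using hle
  | succ n ih =>
    intro μ ν B hμ hν hB hle
    rw [Function.iterate_succ_apply, Function.iterate_succ_apply]
    exact ih (good_Tq hq0 hq1 hμ hB) (good_Tq hq0 hq1 hν hB) (by linarith)
      (icvLe_Tq hq0 hq1 hμ hν hB hle)

lemma good_iter {q : ℝ} (hq0 : 0 ≤ q) (hq1 : q ≤ 1) (n : ℕ) {μ : Measure ℝ} {B : ℝ}
    (hμ : Good 1 B μ) (hB : 1 ≤ B) : Good 1 (2 ^ n * B) ((Tq q)^[n] μ) := by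
  induction n generalizing μ B with
  | zero => simpa using hμ
  | succ n ih =>
    rw [Function.iterate_succ_apply]
    have := ih (good_Tq hq0 hq1 hμ hB) (by linarith)
    have heq : (2:ℝ) ^ n * (2 * B) = 2 ^ (n+1) * B := by ring
    rwa [heq] at this

lemma par_scale (t a b : ℝ) (ht : t ≠ 0) : Par (t * a, t * b) = t * Par (a, b) := by
  rcases eq_or_ne (a + b) 0 with h0 | h0
  · rw [par_apply, par_apply, h0, show t * a + t * b = t * (a + b) by ring, h0]
    simp
  · rw [par_apply, par_apply, show t * a + t * b = t * (a + b) by ring]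
    field_simp

lemma kap_scale (t : ℝ) (μ : Measure ℝ) [SFinite μ] :
    kap (Measure.map (fun x => t * x) μ) = Measure.map (fun x => t * x) (kap μ) := by
  have hm : Measurable fun x : ℝ => t * x := measurable_const_mul t
  rw [kap, kap, Measure.map_prod_map _ _ hm hm,
    Measure.map_map meas_S (hm.prodMap hm), Measure.map_map hm meas_S]
  congr 1
  funext p
  show Sfun (t * p.1, t * p.2) = t * Sfun p
  rw [Sfun]
  show t * p.1 + t * p.2 = _
  rw [Sfun]
  ring

lemma mapPar_scale (t : ℝ) (ht : t ≠ 0) (κ : Measure ℝ) [SFinite κ] :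
    Measure.map Par ((Measure.map (fun x => t * x) κ).prod (Measure.map (fun x => t * x) κ))
      = Measure.map (fun x => t * x) (Measure.map Par (κ.prod κ)) := by
  have hm : Measurable fun x : ℝ => t * x := measurable_const_mul t
  rw [Measure.map_prod_map _ _ hm hm, Measure.map_map meas_Par (hm.prodMap hm),
    Measure.map_map hm meas_Par]
  congr 1
  funext p
  show Par (t * p.1, t * p.2) = t * Par p
  rw [par_scale _ _ _ ht]

lemma Tq_scale (q t : ℝ) (ht : t ≠ 0) (μ : Measure ℝ) [IsProbabilityMeasure μ] :
    Tq q (Measure.map (fun x => t * x) μ) = Measure.map (fun x => t * x) (Tq q μ) := by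
  have hm : Measurable fun x : ℝ => t * x := measurable_const_mul t
  haveI : IsProbabilityMeasure (Measure.map (fun x => t * x) μ) :=
    Measure.isProbabilityMeasure_map hm.aemeasurable
  rw [Tq_eq, Tq_eq, kap_scale, mapPar_scale t ht, Measure.map_add _ _ hm,
    Measure.map_smul, Measure.map_smul]

lemma prob_iter {q : ℝ} (hq0 : 0 ≤ q) (hq1 : q ≤ 1) (n : ℕ) (μ : Measure ℝ)
    [IsProbabilityMeasure μ] : IsProbabilityMeasure ((Tq q)^[n] μ) := by
  induction n with
  | zero => simpa using ‹IsProbabilityMeasure μ›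
  | succ n ih =>
    rw [Function.iterate_succ_apply']
    haveI := ih
    exact Tq_prob q hq0 hq1 _

lemma iter_scale {q : ℝ} (hq0 : 0 ≤ q) (hq1 : q ≤ 1) (t : ℝ) (ht : t ≠ 0) (n : ℕ)
    (μ : Measure ℝ) [IsProbabilityMeasure μ] :
    (Tq q)^[n] (Measure.map (fun x => t * x) μ)
      = Measure.map (fun x => t * x) ((Tq q)^[n] μ) := by
  induction n with
  | zero => simp
  | succ n ih =>
    rw [Function.iterate_succ_apply', Function.iterate_succ_apply', ih]
    haveI := prob_iter hq0 hq1 n μ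
    exact Tq_scale q t ht _

lemma submult (n k : ℕ) : m1 (mu q0 (n + k)) ≤ m1 (mu q0 n) * m1 (mu q0 k) := by
  obtain ⟨hgk, hsk, hlk⟩ := mu_invariant k
  haveI := hgk.1
  set ak := m1 (mu q0 k) with hak_def
  have hak : ak ∈ Icc (1:ℝ) (2 ^ k) := good_m1_mem hgk
  have hakpos : ak ≠ 0 := by have := hak.1; intro h; rw [h] at this; linarith
  have hdg : Good 1 (2 ^ k) (Measure.dirac ak) :=
    ⟨inferInstance, (ae_dirac_iff measurableSet_Icc).2 hak⟩
  have hJ : IcvLe (mu q0 k) (Measure.dirac ak) := by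
    have := jensen_icv hgk zero_le_one
    rwa [← hak_def] at this
  have hB : (1:ℝ) ≤ 2 ^ k := one_le_pow₀ (by norm_num)
  have hchain := icvLe_iter hq0 hq1 n hgk hdg hB hJ (fun z => z) nice_id
  have hm : Measurable fun x : ℝ => ak * x := measurable_const_mul ak
  have hdirac_eq : Measure.dirac ak = Measure.map (fun x => ak * x) (Measure.dirac 1) := by
    rw [Measure.map_dirac' hm 1, mul_one]
  have hscale : (Tq q0)^[n] (Measure.dirac ak)
      = Measure.map (fun x => ak * x) (mu q0 n) := by
    rw [hdirac_eq, iter_scale hq0 hq1 ak hakpos n (Measure.dirac 1)]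
    rfl
  have hLHS : (Tq q0)^[n] (mu q0 k) = mu q0 (n + k) := by
    simp only [mu, ← Function.iterate_add_apply]
  haveI := (mu_invariant n).1.1
  have hRHS : ∫ z, z ∂(Measure.map (fun x => ak * x) (mu q0 n)) = ak * m1 (mu q0 n) := by
    rw [integral_map (f := fun z : ℝ => z) hm.aemeasurable
      measurable_id'.aestronglyMeasurable]
    show ∫ x, ak * x ∂(mu q0 n) = _
    rw [integral_const_mul]
    rfl
  rw [hLHS, hscale, hRHS] at hchain
  rw [mul_comm]
  exact hchain

end StmtAux


namespace StmtAux

theorem final :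
    (∀ n : ℕ, ((14 - 4 * Real.sqrt 5) / 3) ^ n ≤ ∫ z, z ∂(mu (Real.sqrt 5 - 2) n)) ∧
    (∃ α : ℝ,
      Tendsto (fun n : ℕ =>
          (1 / (n : ℝ)) * Real.log (∫ z, z ∂(mu (Real.sqrt 5 - 2) n))) atTop (nhds α) ∧
      Real.log ((14 - 4 * Real.sqrt 5) / 3) ≤ α) ∧
    0 < Real.log ((14 - 4 * Real.sqrt 5) / 3) := by
  have hmpos : ∀ n, 1 ≤ m1 (mu q0 n) := fun n => (good_m1_mem (mu_invariant n).1).1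
  have hlow : ∀ n, c0 ^ n ≤ m1 (mu q0 n) := fun n => (mu_invariant n).2.2
  set u : ℕ → ℝ := fun n => Real.log (m1 (mu q0 n)) with hu
  have hsub : Subadditive u := by
    intro m n
    have h1 := submult m n
    calc u (m + n) ≤ Real.log (m1 (mu q0 m) * m1 (mu q0 n)) :=
          Real.log_le_log (by linarith [hmpos (m + n)]) h1
      _ = u m + u n := Real.log_mul (by linarith [hmpos m]) (by linarith [hmpos n])
  have hbdd : BddBelow (Set.range fun n : ℕ => u n / n) := by
    refine ⟨0, ?_⟩
    rintro x ⟨n, rfl⟩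
    exact div_nonneg (Real.log_nonneg (hmpos n)) (Nat.cast_nonneg n)
  have htend := hsub.tendsto_lim hbdd
  have hc0pos : (0:ℝ) < c0 := by linarith [hc1]
  have hlogc : ∀ n : ℕ, 1 ≤ n → Real.log c0 ≤ u n / n := by
    intro n hn
    have h1 : (n:ℝ) * Real.log c0 ≤ u n := by
      rw [← Real.log_pow]
      exact Real.log_le_log (pow_pos hc0pos n) (hlow n)
    have hnpos : (0:ℝ) < n := by exact_mod_cast hn
    rw [le_div_iff₀ hnpos]
    linarith [h1, mul_comm (n:ℝ) (Real.log c0)]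
  have hαge : Real.log c0 ≤ hsub.lim :=
    ge_of_tendsto htend (eventually_atTop.2 ⟨1, fun n hn => hlogc n hn⟩)
  refine ⟨fun n => hlow n, ⟨hsub.lim, ?_, hαge⟩, Real.log_pos hc1⟩
  have heq : (fun n : ℕ => (1 / (n:ℝ)) * Real.log (∫ z, z ∂(mu (Real.sqrt 5 - 2) n)))
      = fun n : ℕ => u n / n := by
    funext n
    rw [one_div, inv_mul_eq_div]
    rfl
  rw [heq]
  exact htend

end StmtAux

theorem stmt3 :
    (∀ n : ℕ, ((14 - 4 * Real.sqrt 5) / 3) ^ n ≤ ∫ z, z ∂(mu (Real.sqrt 5 - 2) n)) ∧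
    (∃ α : ℝ,
      Tendsto (fun n : ℕ =>
          (1 / (n : ℝ)) * Real.log (∫ z, z ∂(mu (Real.sqrt 5 - 2) n))) atTop (nhds α) ∧
      Real.log ((14 - 4 * Real.sqrt 5) / 3) ≤ α) ∧
    0 < Real.log ((14 - 4 * Real.sqrt 5) / 3) :=
  StmtAux.final
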